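/- Let H² denote the Hardy space realized as ℓ²(ℕ, ℂ) and let M_z be the unilateral shift S : ℓ²(ℕ) → ℓ²(ℕ), (S a)(n+1) = a(n), (S a)(0) = 0. Then there exists a norm-one linear idempotent P : B(ℓ²(ℕ)) → B(ℓ²(ℕ)) whose range is exactly the set 𝒯 = {C ∈ B(ℓ²(ℕ)) : S* C S = C} of Toeplitz operators. -/

import Mathlib

open scoped ENNReal
open Filter Topology

set_option linter.unusedSectionVars false
set_option linter.unusedTactic false



open Filter Topology

noncomputable section

namespace ToeplitzAux

/-- Cesàro averages. -/
def ces (a : ℕ → ℂ) (n : ℕ) : ℂ := (∑ k ∈ Finset.range n, a k) / n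

/-- A Banach limit: ultrafilter limit of Cesàro averages. -/
def BL (a : ℕ → ℂ) : ℂ := limUnder (Filter.hyperfilter ℕ) (ces a)

theorem ces_norm_le {a : ℕ → ℂ} {M : ℝ} (h : ∀ n, ‖a n‖ ≤ M) (n : ℕ) :
    ‖ces a n‖ ≤ M := by
  have hM : 0 ≤ M := le_trans (norm_nonneg _) (h 0)
  rcases Nat.eq_zero_or_pos n with rfl | hn
  · simp [ces, hM]
  · have : ‖∑ k ∈ Finset.range n, a k‖ ≤ n * M := by
      calc ‖∑ k ∈ Finset.range n, a k‖ ≤ ∑ k ∈ Finset.range n, ‖a k‖ :=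
            norm_sum_le _ _
        _ ≤ ∑ _k ∈ Finset.range n, M := Finset.sum_le_sum fun k _ => h k
        _ = n * M := by simp
    rw [ces, norm_div]
    rw [div_le_iff₀ (show (0:ℝ) < ‖(n:ℂ)‖ by simp [Complex.norm_natCast]; exact_mod_cast hn)]
    simpa [Complex.norm_natCast, mul_comm] using this

theorem BL_tendsto {a : ℕ → ℂ} {M : ℝ} (h : ∀ n, ‖a n‖ ≤ M) :
    Tendsto (ces a) (Filter.hyperfilter ℕ : Filter ℕ) (𝓝 (BL a)) := by
  have hcpt : IsCompact (Metric.closedBall (0:ℂ) M) := isCompact_closedBall _ _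
  have hev : ∀ᶠ n in (Filter.hyperfilter ℕ : Filter ℕ),
      ces a n ∈ Metric.closedBall (0:ℂ) M :=
    Filter.Eventually.of_forall fun n => by
      simpa [Metric.mem_closedBall, dist_eq_norm] using ces_norm_le h n
  have hle : (Ultrafilter.map (ces a) (Filter.hyperfilter ℕ) : Filter ℂ) ≤
      Filter.principal (Metric.closedBall (0:ℂ) M) := by
    rw [Ultrafilter.coe_map, Filter.le_principal_iff]
    exact Filter.mem_map.mpr hev
  obtain ⟨c, -, hc⟩ := hcpt.ultrafilter_le_nhds _ hle
  rw [Ultrafilter.coe_map] at hc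
  exact tendsto_nhds_limUnder ⟨c, hc⟩

theorem BL_norm_le {a : ℕ → ℂ} {M : ℝ} (h : ∀ n, ‖a n‖ ≤ M) : ‖BL a‖ ≤ M :=
  le_of_tendsto ((BL_tendsto h).norm) (Filter.Eventually.of_forall (ces_norm_le h))

theorem BL_add {a b : ℕ → ℂ} {Ma Mb : ℝ} (ha : ∀ n, ‖a n‖ ≤ Ma)
    (hb : ∀ n, ‖b n‖ ≤ Mb) :
    BL (fun n => a n + b n) = BL a + BL b := by
  have hces : ces (fun n => a n + b n) = fun n => ces a n + ces b n := by
    funext n; simp [ces, Finset.sum_add_distrib, add_div]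
  have : Tendsto (ces fun n => a n + b n) (Filter.hyperfilter ℕ : Filter ℕ)
      (𝓝 (BL a + BL b)) := by
    rw [hces]; exact (BL_tendsto ha).add (BL_tendsto hb)
  exact this.limUnder_eq

theorem BL_smul {a : ℕ → ℂ} {M : ℝ} (c : ℂ) (ha : ∀ n, ‖a n‖ ≤ M) :
    BL (fun n => c * a n) = c * BL a := by
  have hces : ces (fun n => c * a n) = fun n => c * ces a n := by
    funext n; simp [ces, ← Finset.mul_sum, mul_div_assoc]
  have : Tendsto (ces fun n => c * a n) (Filter.hyperfilter ℕ : Filter ℕ)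
      (𝓝 (c * BL a)) := by
    rw [hces]; exact (BL_tendsto ha).const_mul c
  exact this.limUnder_eq

theorem BL_const (c : ℂ) : BL (fun _ => c) = c := by
  have h1 : Tendsto (ces fun _ => c) atTop (𝓝 c) := by
    have : ∀ᶠ n in atTop, ces (fun _ => c) n = c := by
      filter_upwards [Filter.eventually_ge_atTop 1] with n hn
      have hn' : (n : ℂ) ≠ 0 := Nat.cast_ne_zero.mpr (by omega)
      simp [ces, mul_div_assoc, mul_comm, hn', mul_div_cancel_left₀]
    exact Filter.Tendsto.congr' (Filter.EventuallyEq.symm this) tendsto_const_nhds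
  exact (h1.mono_left Nat.hyperfilter_le_atTop).limUnder_eq

theorem BL_shift {a : ℕ → ℂ} {M : ℝ} (h : ∀ n, ‖a n‖ ≤ M) :
    BL (fun n => a (n + 1)) = BL a := by
  have hces : ces (fun n => a (n + 1)) = fun n => ces a n + (a n - a 0) / n := by
    funext n
    rcases Nat.eq_zero_or_pos n with rfl | hn
    · simp [ces]
    · have hsum : ∑ k ∈ Finset.range n, a (k + 1) =
          (∑ k ∈ Finset.range n, a k) + a n - a 0 := by
        linear_combination (Finset.sum_range_succ a n) - (Finset.sum_range_succ' a n)
    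
      simp only [ces, hsum]
      ring
  have hd : Tendsto (fun n : ℕ => (a n - a 0) / (n : ℂ)) atTop (𝓝 0) := by
    refine squeeze_zero_norm (fun n => ?_) (tendsto_const_div_atTop_nhds_zero_nat (M + M))
    · skip
      rcases Nat.eq_zero_or_pos n with rfl | hn
      · simp
      · rw [norm_div, Complex.norm_natCast, div_le_div_iff_of_pos_right (by positivity)]
        exact le_trans (norm_sub_le _ _) (add_le_add (h n) (h 0))
  have : Tendsto (ces fun n => a (n + 1)) (Filter.hyperfilter ℕ : Filter ℕ)
      (𝓝 (BL a)) := by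
    rw [hces]
    simpa using (BL_tendsto h).add (hd.mono_left Nat.hyperfilter_le_atTop)
  exact this.limUnder_eq

variable {E : Type*} [NormedAddCommGroup E] [InnerProductSpace ℂ E] [CompleteSpace E]

local notation "⟪" x ", " y "⟫" => @inner ℂ _ _ x y

section
variable (S : E →L[ℂ] E) (hiso : ∀ a b : E, ⟪S a, S b⟫ = ⟪a, b⟫)

/-- The sequence whose Banach limit defines the projection. -/
def seq (C : E →L[ℂ] E) (ξ η : E) (n : ℕ) : ℂ := ⟪C ((S ^ n) ξ), (S ^ n) η⟫

variable {S} in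
theorem seq_apply (C : E →L[ℂ] E) (ξ η : E) (n : ℕ) :
    seq S C ξ η n = ⟪C ((S ^ n) ξ), (S ^ n) η⟫ := rfl

include hiso

theorem pow_inner (n : ℕ) (x y : E) : ⟪(S ^ n) x, (S ^ n) y⟫ = ⟪x, y⟫ := by
  induction n with
  | zero => simp
  | succ n ih =>
      rw [pow_succ']
      simp only [ContinuousLinearMap.mul_apply]
      rw [hiso, ih]

theorem pow_norm (n : ℕ) (x : E) : ‖(S ^ n) x‖ = ‖x‖ := by
  have h := pow_inner S hiso n x x
  rw [inner_self_eq_norm_sq_to_K, inner_self_eq_norm_sq_to_K] at h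
  have := Complex.ofReal_injective (by exact_mod_cast h : ((‖(S^n) x‖^2 : ℝ) : ℂ) = (‖x‖^2 : ℝ))
  nlinarith [norm_nonneg ((S^n) x), norm_nonneg x]

theorem seq_norm_le (C : E →L[ℂ] E) (ξ η : E) (n : ℕ) :
    ‖seq S C ξ η n‖ ≤ ‖C‖ * ‖ξ‖ * ‖η‖ := by
  calc ‖seq S C ξ η n‖ ≤ ‖C ((S ^ n) ξ)‖ * ‖(S ^ n) η‖ := norm_inner_le_norm _ _
    _ ≤ (‖C‖ * ‖(S ^ n) ξ‖) * ‖(S ^ n) η‖ :=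
        mul_le_mul_of_nonneg_right (C.le_opNorm _) (norm_nonneg _)
    _ = ‖C‖ * ‖ξ‖ * ‖η‖ := by rw [pow_norm S hiso, pow_norm S hiso]

/-- The bounded functional `η ↦ BL (seq C ξ η)`. -/
def phi (C : E →L[ℂ] E) (ξ : E) : E →L[ℂ] ℂ :=
  LinearMap.mkContinuous
    { toFun := fun η => BL (seq S C ξ η)
      map_add' := fun η₁ η₂ => by
        have h : seq S C ξ (η₁ + η₂) = fun n => seq S C ξ η₁ n + seq S C ξ η₂ n := by
          funext n; simp [seq, inner_add_right]
        show BL (seq S C ξ (η₁ + η₂)) = BL (seq S C ξ η₁) + BL (seq S C ξ η₂)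
        rw [h, BL_add (seq_norm_le S hiso C ξ η₁) (seq_norm_le S hiso C ξ η₂)]
      map_smul' := fun c η => by
        have h : seq S C ξ (c • η) = fun n => c * seq S C ξ η n := by
          funext n; simp [seq, inner_smul_right]
        show BL (seq S C ξ (c • η)) = c • BL (seq S C ξ η)
        rw [h, BL_smul c (seq_norm_le S hiso C ξ η), smul_eq_mul] }
    (‖C‖ * ‖ξ‖)
    (fun η => BL_norm_le (seq_norm_le S hiso C ξ η))

/-- The value of the projection, as a map of `ξ`. -/
def PopFun (C : E →L[ℂ] E) (ξ : E) : E :=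
  (InnerProductSpace.toDual ℂ E).symm (phi S hiso C ξ)

theorem inner_PopFun (C : E →L[ℂ] E) (ξ η : E) :
    ⟪PopFun S hiso C ξ, η⟫ = BL (seq S C ξ η) :=
  InnerProductSpace.toDual_symm_apply

theorem PopFun_norm_le (C : E →L[ℂ] E) (ξ : E) : ‖PopFun S hiso C ξ‖ ≤ ‖C‖ * ‖ξ‖ := by
  rw [PopFun, LinearIsometryEquiv.norm_map]
  exact LinearMap.mkContinuous_norm_le _ (by positivity) _

/-- The projection applied to `C`. -/
def Pop (C : E →L[ℂ] E) : E →L[ℂ] E :=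
  LinearMap.mkContinuous
    { toFun := PopFun S hiso C
      map_add' := fun ξ₁ ξ₂ => ext_inner_right ℂ fun η => by
        rw [inner_PopFun, inner_add_left, inner_PopFun, inner_PopFun]
        have h : seq S C (ξ₁ + ξ₂) η = fun n => seq S C ξ₁ η n + seq S C ξ₂ η n := by
          funext n; simp [seq, inner_add_left]
        rw [h, BL_add (seq_norm_le S hiso C ξ₁ η) (seq_norm_le S hiso C ξ₂ η)]
      map_smul' := fun c ξ => ext_inner_right ℂ fun η => by
        rw [RingHom.id_apply, inner_PopFun, inner_smul_left, inner_PopFun]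
        have h : seq S C (c • ξ) η =
            fun n => (starRingEnd ℂ) c * seq S C ξ η n := by
          funext n; simp [seq, inner_smul_left, mul_comm]
        rw [h, BL_smul _ (seq_norm_le S hiso C ξ η)] }
    ‖C‖ (fun ξ => PopFun_norm_le S hiso C ξ)

theorem inner_Pop (C : E →L[ℂ] E) (ξ η : E) :
    ⟪Pop S hiso C ξ, η⟫ = BL (seq S C ξ η) :=
  inner_PopFun S hiso C ξ η

/-- The norm-one projection onto Toeplitz operators. -/
def Pproj : (E →L[ℂ] E) →L[ℂ] (E →L[ℂ] E) :=
  LinearMap.mkContinuous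
    { toFun := Pop S hiso
      map_add' := fun C D => ContinuousLinearMap.ext fun ξ =>
        ext_inner_right ℂ fun η => by
          rw [ContinuousLinearMap.add_apply, inner_Pop, inner_add_left,
            inner_Pop, inner_Pop]
          have h : seq S (C + D) ξ η = fun n => seq S C ξ η n + seq S D ξ η n := by
            funext n; simp [seq, inner_add_left]
          rw [h, BL_add (seq_norm_le S hiso C ξ η) (seq_norm_le S hiso D ξ η)]
      map_smul' := fun c C => ContinuousLinearMap.ext fun ξ =>
        ext_inner_right ℂ fun η => by
          rw [RingHom.id_apply, ContinuousLinearMap.smul_apply, inner_Pop,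
            inner_smul_left, inner_Pop]
          have h : seq S (c • C) ξ η =
              fun n => (starRingEnd ℂ) c * seq S C ξ η n := by
            funext n; simp [seq, inner_smul_left, mul_comm]
          rw [h, BL_smul _ (seq_norm_le S hiso C ξ η)] }
    1 (fun C => by
      rw [one_mul]; exact LinearMap.mkContinuous_norm_le _ (norm_nonneg C) (PopFun_norm_le S hiso C))

theorem Pproj_apply (C : E →L[ℂ] E) : Pproj S hiso C = Pop S hiso C := rfl

theorem Pop_toeplitz (C : E →L[ℂ] E) :
    (ContinuousLinearMap.adjoint S).comp ((Pop S hiso C).comp S) = Pop S hiso C :=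
  ContinuousLinearMap.ext fun ξ => ext_inner_right ℂ fun η => by
    rw [ContinuousLinearMap.comp_apply, ContinuousLinearMap.comp_apply,
      ContinuousLinearMap.adjoint_inner_left, inner_Pop, inner_Pop]
    have h : seq S C (S ξ) (S η) = fun n => seq S C ξ η (n + 1) := by
      funext n
      simp only [seq, ← ContinuousLinearMap.mul_apply, ← pow_succ]
    rw [h, BL_shift (seq_norm_le S hiso C ξ η)]

theorem Pop_of_toeplitz {C : E →L[ℂ] E}
    (hC : (ContinuousLinearMap.adjoint S).comp (C.comp S) = C) :
    Pop S hiso C = C := by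
  have hC' : ∀ ξ η : E, ⟪C (S ξ), S η⟫ = ⟪C ξ, η⟫ := fun ξ η => by
    conv_rhs => rw [← hC]
    rw [ContinuousLinearMap.comp_apply, ContinuousLinearMap.comp_apply,
      ContinuousLinearMap.adjoint_inner_left]
  have hseq : ∀ ξ η n, seq S C ξ η n = ⟪C ξ, η⟫ := by
    intro ξ η n
    induction n with
    | zero => simp [seq]
    | succ n ih =>
        rw [← ih, seq_apply, seq_apply, pow_succ']
        simp only [ContinuousLinearMap.mul_apply]
        exact hC' ((S ^ n) ξ) ((S ^ n) η)
  refine ContinuousLinearMap.ext fun ξ => ext_inner_right ℂ fun η => ?_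
  rw [inner_Pop]
  have h : seq S C ξ η = fun _ => ⟪C ξ, η⟫ := funext (hseq ξ η)
  rw [h, BL_const]

theorem id_toeplitz :
    (ContinuousLinearMap.adjoint S).comp
      ((ContinuousLinearMap.id ℂ E).comp S) = ContinuousLinearMap.id ℂ E :=
  ContinuousLinearMap.ext fun ξ => ext_inner_right ℂ fun η => by
    rw [ContinuousLinearMap.comp_apply, ContinuousLinearMap.comp_apply,
      ContinuousLinearMap.adjoint_inner_left]
    simp [hiso]

theorem main [Nontrivial E] :
    ∃ P : (E →L[ℂ] E) →L[ℂ] (E →L[ℂ] E),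
      ‖P‖ = 1 ∧ P.comp P = P ∧
      Set.range ⇑P =
        {C : E →L[ℂ] E | (ContinuousLinearMap.adjoint S).comp (C.comp S) = C} := by
  refine ⟨Pproj S hiso, ?_, ?_, ?_⟩
  · refine le_antisymm (LinearMap.mkContinuous_norm_le _ zero_le_one _) ?_
    have h1 : Pproj S hiso (ContinuousLinearMap.id ℂ E) =
        ContinuousLinearMap.id ℂ E := by
      rw [Pproj_apply, Pop_of_toeplitz S hiso (id_toeplitz S hiso)]
    calc (1 : ℝ) = ‖ContinuousLinearMap.id ℂ E‖ := (ContinuousLinearMap.norm_id).symm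
      _ = ‖Pproj S hiso (ContinuousLinearMap.id ℂ E)‖ := by rw [h1]
      _ ≤ ‖Pproj S hiso‖ * ‖ContinuousLinearMap.id ℂ E‖ :=
          ContinuousLinearMap.le_opNorm _ _
      _ = ‖Pproj S hiso‖ := by rw [ContinuousLinearMap.norm_id, mul_one]
  · refine ContinuousLinearMap.ext fun C => ?_
    rw [ContinuousLinearMap.comp_apply]
    simp only [Pproj_apply]
    rw [Pop_of_toeplitz S hiso (Pop_toeplitz S hiso C)]
  · ext C
    constructor
    · rintro ⟨D, rfl⟩
      exact Pop_toeplitz S hiso D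
    · intro hC
      exact ⟨C, Pop_of_toeplitz S hiso hC⟩

end


theorem lp_nontrivial : Nontrivial (lp (fun _ : ℕ => ℂ) 2) := by
  refine ⟨lp.single 2 0 (1:ℂ), 0, fun h => ?_⟩
  have h0 : (lp.single 2 0 (1:ℂ) : lp (fun _ : ℕ => ℂ) 2) 0
      = (0 : lp (fun _ : ℕ => ℂ) 2) 0 := by rw [h]
  rw [lp.single_apply_self] at h0
  simp at h0

end ToeplitzAux


open ContinuousLinearMap in
/-- There is a norm-one idempotent on `B(H²)` whose range is exactly the set of
Toeplitz operators `{C : S* C S = C}`, where `S` is the unilateral shift on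
`H² = ℓ²(ℕ)`. -/
theorem stmt_10
    (S : lp (fun _ : ℕ => ℂ) 2 →L[ℂ] lp (fun _ : ℕ => ℂ) 2)
    (hS0 : ∀ a : lp (fun _ : ℕ => ℂ) 2, (S a) 0 = 0)
    (hS : ∀ (a : lp (fun _ : ℕ => ℂ) 2) (n : ℕ), (S a) (n + 1) = a n) :
    ∃ P : (lp (fun _ : ℕ => ℂ) 2 →L[ℂ] lp (fun _ : ℕ => ℂ) 2) →L[ℂ]
          (lp (fun _ : ℕ => ℂ) 2 →L[ℂ] lp (fun _ : ℕ => ℂ) 2),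
      ‖P‖ = 1 ∧ P.comp P = P ∧
      Set.range ⇑P =
        {C : lp (fun _ : ℕ => ℂ) 2 →L[ℂ] lp (fun _ : ℕ => ℂ) 2 |
          (adjoint S).comp (C.comp S) = C} := by
  have : Nontrivial (lp (fun _ : ℕ => ℂ) 2) := ToeplitzAux.lp_nontrivial
  have hiso : ∀ a b : lp (fun _ : ℕ => ℂ) 2,
      (inner ℂ (S a) (S b) : ℂ) = inner ℂ a b := fun a b => by
    rw [lp.inner_eq_tsum, lp.inner_eq_tsum,
      Summable.tsum_eq_zero_add (G := ℂ) (lp.summable_inner (S a) (S b))]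
    simp only [hS0, hS, inner_zero_left, zero_add]
  exact ToeplitzAux.main S hiso
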